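/- arXiv:1901.02254 — 3 statements merged into one kernel-verified Lean document; each statement's English description precedes it below -/
import Mathlib

section
/- In the discrete-time EbDO evaluation problem with n maturity dates, if (X_i, Y_i, X'_i)_{i=0,...,n} is a solution (i.e., the processes are nonnegative, adapted, X_i = X'_{i-1}·Z_i, X'_i = X_i − h_i(Y_i), Y is a martingale, Y_n = X'_n, X'_0 = X_0), then X'_i = f_i⁻¹(Y_i) for all i ∈ {1,...,n}, where f_n = Id and f_{i-1}(x) := E[(f_i⁻¹ + h_i)⁻¹(x·Z_i)]. -/
open Set MeasureTheory ProbabilityTheory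

lemma ebdo_indep_mono {Ω : Type*} {mΩ : MeasurableSpace Ω} {P : Measure Ω}
    {m₁ m₂ m₁' m₂' : MeasurableSpace Ω} (h : Indep m₁ m₂ P)
    (h1 : m₁' ≤ m₁) (h2 : m₂' ≤ m₂) : Indep m₁' m₂' P := by
  rw [Indep_iff] at h ⊢
  exact fun t1 t2 ht1 ht2 => h t1 t2 (h1 _ ht1) (h2 _ ht2)

lemma ebdo_freeze_setIntegral {Ω : Type*} [mΩ : MeasurableSpace Ω] (P : Measure Ω)
    [IsProbabilityMeasure P]
    (W ζ B : Ω → ℝ) (hW : Measurable W) (hζ : Measurable ζ) (hB : Measurable B)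
    (hBbd : ∀ ω, ‖B ω‖ ≤ 1)
    (φ : ℝ → ℝ) (hφ : Measurable φ)
    (hindep : IndepFun (fun ω => (W ω, B ω)) ζ P)
    (hint : Integrable (fun ω => φ (W ω * ζ ω)) P) :
    ∫ ω, B ω * φ (W ω * ζ ω) ∂P = ∫ ω, B ω * (∫ ω', φ (W ω * ζ ω') ∂P) ∂P := by
  set V : Ω → ℝ × ℝ := fun ω => (W ω, B ω) with hV_def
  have hV : Measurable V := hW.prodMk hB
  have hpair : Measurable (fun ω => (V ω, ζ ω)) := hV.prodMk hζ
  have hmap : P.map (fun ω => (V ω, ζ ω)) = (P.map V).prod (P.map ζ) :=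
    (indepFun_iff_map_prod_eq_prod_map_map hV.aemeasurable hζ.aemeasurable).mp hindep
  set ψ : (ℝ × ℝ) × ℝ → ℝ := fun p => p.1.2 * φ (p.1.1 * p.2) with hψ_def
  have hψ : Measurable ψ :=
    (measurable_snd.comp measurable_fst).mul (hφ.comp ((measurable_fst.comp measurable_fst).mul measurable_snd))
  have hψint : Integrable ψ ((P.map V).prod (P.map ζ)) := by
    rw [← hmap]
    rw [integrable_map_measure hψ.aestronglyMeasurable hpair.aemeasurable]
    exact Integrable.bdd_mul hint hB.aestronglyMeasurable (Filter.Eventually.of_forall hBbd)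
  have h1 : ∫ ω, B ω * φ (W ω * ζ ω) ∂P = ∫ p, ψ p ∂((P.map V).prod (P.map ζ)) := by
    rw [← hmap, integral_map hpair.aemeasurable hψ.aestronglyMeasurable]
  rw [h1, integral_prod ψ hψint]
  have h2 : ∀ v : ℝ × ℝ, ∫ z, ψ (v, z) ∂(P.map ζ) = v.2 * ∫ z, φ (v.1 * z) ∂(P.map ζ) := by
    intro v
    simp only [hψ_def]
    exact integral_const_mul _ _
  simp_rw [h2]
  have hFmeas : StronglyMeasurable (fun x : ℝ => ∫ z, φ (x * z) ∂(P.map ζ)) := by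
    have : IsProbabilityMeasure (P.map ζ) := Measure.isProbabilityMeasure_map hζ.aemeasurable
    exact (hφ.comp (measurable_fst.mul measurable_snd)).stronglyMeasurable.integral_prod_right'
  have h3 : ∫ v, v.2 * ∫ z, φ (v.1 * z) ∂(P.map ζ) ∂(P.map V)
      = ∫ ω, B ω * ∫ z, φ (W ω * z) ∂(P.map ζ) ∂P := by
    rw [integral_map hV.aemeasurable]
    exact (measurable_snd.stronglyMeasurable.mul (hFmeas.comp_measurable measurable_fst)).aestronglyMeasurable
  rw [h3]
  congr 1
  funext ω
  congr 1
  rw [integral_map (f := fun z => φ (W ω * z)) hζ.aemeasurable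
    (hφ.comp (measurable_const_mul _)).aestronglyMeasurable]

lemma ebdo_freeze_integrable {Ω : Type*} [mΩ : MeasurableSpace Ω] (P : Measure Ω)
    [IsProbabilityMeasure P]
    (W ζ : Ω → ℝ) (hW : Measurable W) (hζ : Measurable ζ)
    (φ : ℝ → ℝ) (hφ : Measurable φ)
    (hindep : IndepFun W ζ P)
    (hint : Integrable (fun ω => φ (W ω * ζ ω)) P) :
    Integrable (fun ω => ∫ ω', φ (W ω * ζ ω') ∂P) P := by
  have hpair : Measurable (fun ω => (W ω, ζ ω)) := hW.prodMk hζ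
  have hmap : P.map (fun ω => (W ω, ζ ω)) = (P.map W).prod (P.map ζ) :=
    (indepFun_iff_map_prod_eq_prod_map_map hW.aemeasurable hζ.aemeasurable).mp hindep
  set ψ : ℝ × ℝ → ℝ := fun p => φ (p.1 * p.2) with hψ_def
  have hψ : Measurable ψ := hφ.comp (measurable_fst.mul measurable_snd)
  have hψint : Integrable ψ ((P.map W).prod (P.map ζ)) := by
    rw [← hmap, integrable_map_measure hψ.aestronglyMeasurable hpair.aemeasurable]
    exact hint
  have h1 : Integrable (fun x => ∫ z, ψ (x, z) ∂(P.map ζ)) (P.map W) :=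
    hψint.integral_prod_left
  have hFmeas : StronglyMeasurable (fun x : ℝ => ∫ z, φ (x * z) ∂(P.map ζ)) := by
    have : IsProbabilityMeasure (P.map ζ) := Measure.isProbabilityMeasure_map hζ.aemeasurable
    exact hψ.stronglyMeasurable.integral_prod_right'
  rw [integrable_map_measure hFmeas.aestronglyMeasurable hW.aemeasurable] at h1
  apply h1.congr
  filter_upwards with ω
  simp only [Function.comp]
  rw [integral_map (f := fun z => φ (W ω * z)) hζ.aemeasurable
    (hφ.comp (measurable_const_mul _)).aestronglyMeasurable]


/-- In the discrete-time EbDO evaluation problem, any solution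
(X, Y, X') satisfies X'_i = f_i⁻¹(Y_i) for all i ∈ {1,...,n}, where f_n = Id and
f_{i-1}(x) = E[(f_i⁻¹ + h_i)⁻¹(x·Z_i)].  Here `finv i` is the inverse of `f i` on
[0,∞) and `g i` is the inverse of `finv i + h i` on [0,∞). -/
theorem ebdo_stmt5
    {Ω : Type*} [mΩ : MeasurableSpace Ω] (P : Measure Ω) [IsProbabilityMeasure P]
    (n : ℕ) (hn : 0 < n)
    (Z : ℕ → Ω → ℝ) (h f finv g : ℕ → ℝ → ℝ)
    (ℱ : Filtration ℕ mΩ)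
    -- the Z_i are independent, positive, integrable, mean 1 (e.g. lognormal):
    (hZ_meas : ∀ i, Measurable (Z i))
    (hZ_pos : ∀ i, ∀ᵐ ω ∂P, 0 < Z i ω)
    (hZ_int : ∀ i, Integrable (Z i) P)
    (hZ_mean : ∀ i, ∫ ω, Z i ω ∂P = 1)
    (hZ_indep : iIndepFun Z P)
    -- the filtration is generated by the Z_j, j ≤ i:
    (hℱ : ∀ i, (ℱ i : MeasurableSpace Ω)
      = ⨆ j ∈ Finset.Icc 1 i, MeasurableSpace.comap (Z j) inferInstance)
    -- the payoff functions h_i: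
    (hh_mono : ∀ i, MonotoneOn (h i) (Ici 0))
    (hh_map : ∀ i, ∀ y ∈ Ici (0:ℝ), h i y ∈ Ici (0:ℝ))
    (hh0 : ∀ i, h i 0 = 0)
    -- the functions f_i are strictly increasing bijections of [0,∞), f_n = Id:
    (hfn : ∀ y : ℝ, f n y = y)
    (hf_mono : ∀ i, StrictMonoOn (f i) (Ici 0))
    (hf_map : ∀ i, ∀ y ∈ Ici (0:ℝ), f i y ∈ Ici (0:ℝ))
    (hf0 : ∀ i, f i 0 = 0)
    (hfinv_map : ∀ i, ∀ x ∈ Ici (0:ℝ), finv i x ∈ Ici (0:ℝ))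
    (hfinv_left : ∀ i, ∀ y ∈ Ici (0:ℝ), finv i (f i y) = y)
    (hfinv_right : ∀ i, ∀ x ∈ Ici (0:ℝ), f i (finv i x) = x)
    -- g_i is the inverse of finv_i + h_i on [0,∞):
    (hg_map : ∀ i, ∀ x ∈ Ici (0:ℝ), g i x ∈ Ici (0:ℝ))
    (hg_left : ∀ i, ∀ y ∈ Ici (0:ℝ), g i (finv i y + h i y) = y)
    (hg_right : ∀ i, ∀ x ∈ Ici (0:ℝ), finv i (g i x) + h i (g i x) = x)
    -- the backward recursion f_{i-1}(x) = E[(f_i⁻¹ + h_i)⁻¹(x·Z_i)]: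
    (hrec : ∀ i, 1 ≤ i → i ≤ n → ∀ x ∈ Ici (0:ℝ),
      f (i - 1) x = ∫ ω, g i (x * Z i ω) ∂P)
    -- the solution processes:
    (X Y X' : ℕ → Ω → ℝ) (x₀ : ℝ) (hx₀ : 0 ≤ x₀)
    (h_nonneg : ∀ i ≤ n, ∀ᵐ ω ∂P, 0 ≤ X i ω ∧ 0 ≤ Y i ω ∧ 0 ≤ X' i ω)
    (h_adapted : ∀ i ≤ n, StronglyMeasurable[ℱ i] (X i) ∧
      StronglyMeasurable[ℱ i] (Y i) ∧ StronglyMeasurable[ℱ i] (X' i))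
    (hXrec : ∀ i, 1 ≤ i → i ≤ n → ∀ᵐ ω ∂P, X i ω = X' (i - 1) ω * Z i ω)
    (hX'rec : ∀ i, 1 ≤ i → i ≤ n → ∀ᵐ ω ∂P, X' i ω = X i ω - h i (Y i ω))
    (hY_int : ∀ i ≤ n, Integrable (Y i) P)
    (hY_mart : ∀ i j, i ≤ j → j ≤ n → P[Y j|ℱ i] =ᵐ[P] Y i)
    (h_term : ∀ᵐ ω ∂P, Y n ω = X' n ω)
    (h_init : ∀ ω, X 0 ω = x₀ ∧ X' 0 ω = x₀) :
    ∀ i, 1 ≤ i → i ≤ n → ∀ᵐ ω ∂P, X' i ω = finv i (Y i ω) := by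
  
  -- monotonicity of finv and g on [0,∞)
  have hfinv_mono : ∀ i, MonotoneOn (finv i) (Ici 0) := by
    intro i x hx y hy hxy
    by_contra hcon
    push_neg at hcon
    have hlt := hf_mono i (hfinv_map i y hy) (hfinv_map i x hx) hcon
    rw [hfinv_right i x hx, hfinv_right i y hy] at hlt
    exact absurd hxy (not_le.mpr hlt)
  have hg_mono : ∀ i, MonotoneOn (g i) (Ici 0) := by
    intro i x hx y hy hxy
    by_contra hcon
    push_neg at hcon
    have hgy := hg_map i y hy
    have hgx := hg_map i x hx
    have h1 : finv i (g i y) ≤ finv i (g i x) := hfinv_mono i hgy hgx hcon.le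
    have h2 : h i (g i y) ≤ h i (g i x) := hh_mono i hgy hgx hcon.le
    have hyx : y ≤ x := by
      have ey := hg_right i y hy
      have ex := hg_right i x hx
      linarith
    have hxyeq : x = y := le_antisymm hxy hyx
    rw [hxyeq] at hcon
    exact lt_irrefl _ hcon
  have key : ∀ d, ∀ j, 1 ≤ j → j + d = n → ∀ᵐ ω ∂P, X' j ω = finv j (Y j ω) := by
    intro d
    induction d with
    | zero =>
      intro j hj hjn
      have hj_eq : j = n := by omega
      subst hj_eq
      filter_upwards [h_term, h_nonneg j le_rfl] with ω e1 e2
      have h2 := hfinv_left j (Y j ω) (mem_Ici.mpr e2.2.1)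
      rw [hfn (Y j ω)] at h2
      rw [← e1, h2]
    | succ d ih =>
      intro j hj hjn
      have hj1n : j + 1 ≤ n := by omega
      have hIH := ih (j + 1) (by omega) (by omega)
      have hm := ℱ.le j
      have hWsm : StronglyMeasurable[ℱ j] (X' j) := (h_adapted j (by omega)).2.2
      have hWm : Measurable[ℱ j] (X' j) := hWsm.measurable
      have hW : Measurable (X' j) := hWm.mono hm le_rfl
      -- the measurable monotone modification of g (j+1)
      set gi' : ℝ → ℝ := fun t => g (j + 1) (max t 0) with hgi'_def
      have hgi'_meas : Measurable gi' :=
        Monotone.measurable (fun a b hab =>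
          hg_mono (j + 1) (mem_Ici.mpr (le_max_right a 0)) (mem_Ici.mpr (le_max_right b 0))
            (max_le_max hab le_rfl))
      -- independence of ℱ j and Z (j+1)
      have hindep : Indep (ℱ j) (MeasurableSpace.comap (Z (j + 1)) inferInstance) P := by
        have h_le : ∀ k, MeasurableSpace.comap (Z k) inferInstance ≤ mΩ :=
          fun k => (hZ_meas k).comap_le
        have hd : Disjoint {k | k ∈ Finset.Icc 1 j} ({j + 1} : Set ℕ) := by
          rw [Set.disjoint_singleton_right]
          simp
        have hi := indep_iSup_of_disjoint h_le hZ_indep.iIndep hd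
        rw [hℱ j]
        simpa using hi
      -- Y (j+1) = gi' (X' j * Z (j+1)) a.e.
      have EYg : ∀ᵐ ω ∂P, gi' (X' j ω * Z (j + 1) ω) = Y (j + 1) ω := by
        filter_upwards [hX'rec (j + 1) (by omega) hj1n, hXrec (j + 1) (by omega) hj1n,
          h_nonneg (j + 1) hj1n, h_nonneg j (by omega), hZ_pos (j + 1), hIH]
          with ω e1 e2 e3 e4 e5 e6
        have hYnn : 0 ≤ Y (j + 1) ω := e3.2.1
        have e2' : X (j + 1) ω = X' j ω * Z (j + 1) ω := by simpa using e2
        have harg : X' j ω * Z (j + 1) ω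
            = finv (j + 1) (Y (j + 1) ω) + h (j + 1) (Y (j + 1) ω) := by
          rw [← e2']
          rw [e6] at e1
          linarith
        have hargnn : 0 ≤ X' j ω * Z (j + 1) ω := mul_nonneg e4.2.2 e5.le
        simp only [hgi'_def]
        rw [max_eq_left hargnn, harg, hg_left (j + 1) _ (mem_Ici.mpr hYnn)]
      have EYg' : (fun ω => gi' (X' j ω * Z (j + 1) ω)) =ᵐ[P] Y (j + 1) := EYg
      have hint' : Integrable (fun ω => gi' (X' j ω * Z (j + 1) ω)) P :=
        (hY_int (j + 1) hj1n).congr EYg'.symm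
      -- F x = E[gi'(x Z)] and F = f j on [0,∞)
      set F : ℝ → ℝ := fun x => ∫ ω', gi' (x * Z (j + 1) ω') ∂P with hF_def
      have hFj : ∀ x : ℝ, 0 ≤ x → F x = f j x := by
        intro x hx
        have hr : f j x = ∫ ω, g (j + 1) (x * Z (j + 1) ω) ∂P := by
          have := hrec (j + 1) (by omega) hj1n x (mem_Ici.mpr hx)
          simpa using this
        rw [hF_def, hr]
        apply integral_congr_ae
        filter_upwards [hZ_pos (j + 1)] with ω hz
        simp only [hgi'_def]
        rw [max_eq_left (mul_nonneg hx hz.le)]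
      -- integrability of F ∘ X' j
      have hWZindep : IndepFun (X' j) (Z (j + 1)) P := by
        rw [IndepFun_iff_Indep]
        exact ebdo_indep_mono hindep hWm.comap_le le_rfl
      have hFint : Integrable (fun ω => F (X' j ω)) P :=
        ebdo_freeze_integrable P (X' j) (Z (j + 1)) hW (hZ_meas _) gi' hgi'_meas hWZindep hint'
      -- measurability of F
      have hFmeas : StronglyMeasurable F := by
        have hprob : IsProbabilityMeasure (P.map (Z (j + 1))) :=
          Measure.isProbabilityMeasure_map (hZ_meas _).aemeasurable
        have hSM : StronglyMeasurable (fun x : ℝ => ∫ z, gi' (x * z) ∂(P.map (Z (j + 1)))) :=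
          (hgi'_meas.comp (measurable_fst.mul measurable_snd)).stronglyMeasurable.integral_prod_right'
        have hFe : F = fun x => ∫ z, gi' (x * z) ∂(P.map (Z (j + 1))) := by
          funext x
          rw [hF_def]
          rw [integral_map (f := fun z => gi' (x * z)) (hZ_meas _).aemeasurable
            (hgi'_meas.comp (measurable_const_mul _)).aestronglyMeasurable]
        rw [hFe]
        exact hSM
      have hGm : StronglyMeasurable[ℱ j] (fun ω => F (X' j ω)) :=
        (hFmeas.measurable.comp hWm).stronglyMeasurable
      -- set integral equality
      have hsetEq : ∀ s, MeasurableSet[ℱ j] s → P s < ⊤ →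
          ∫ ω in s, F (X' j ω) ∂P = ∫ ω in s, Y (j + 1) ω ∂P := by
        intro s hs _
        set B : Ω → ℝ := s.indicator 1 with hB_def
        have hBm : Measurable[ℱ j] B :=
          (@measurable_one ℝ Ω _ (ℱ j) _).indicator hs
        have hB : Measurable B := hBm.mono hm le_rfl
        have hBbd : ∀ ω, ‖B ω‖ ≤ 1 := by
          intro ω
          by_cases hω : ω ∈ s <;> simp [hB_def, Set.indicator, hω]
        have hBmul : ∀ (u : Ω → ℝ), ∫ ω in s, u ω ∂P = ∫ ω, B ω * u ω ∂P := by
          intro u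
          rw [← integral_indicator (hm s hs)]
          congr 1
          funext ω
          by_cases hω : ω ∈ s <;> simp [hB_def, Set.indicator, hω]
        have hpairindep : IndepFun (fun ω => (X' j ω, B ω)) (Z (j + 1)) P := by
          rw [IndepFun_iff_Indep]
          exact ebdo_indep_mono hindep (hWm.prodMk hBm).comap_le le_rfl
        have hfreeze := ebdo_freeze_setIntegral P (X' j) (Z (j + 1)) B hW (hZ_meas _) hB hBbd
          gi' hgi'_meas hpairindep hint'
        calc ∫ ω in s, F (X' j ω) ∂P
            = ∫ ω, B ω * F (X' j ω) ∂P := hBmul _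
          _ = ∫ ω, B ω * gi' (X' j ω * Z (j + 1) ω) ∂P := hfreeze.symm
          _ = ∫ ω in s, gi' (X' j ω * Z (j + 1) ω) ∂P := (hBmul _).symm
          _ = ∫ ω in s, Y (j + 1) ω ∂P :=
              setIntegral_congr_ae (hm s hs) (EYg.mono fun ω hω _ => hω)
      have hcond : (fun ω => F (X' j ω)) =ᵐ[P] P[Y (j + 1)|ℱ j] :=
        ae_eq_condExp_of_forall_setIntegral_eq hm (hY_int (j + 1) hj1n)
          (fun s _ _ => hFint.integrableOn) hsetEq hGm.aestronglyMeasurable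
      have hYj : Y j =ᵐ[P] fun ω => F (X' j ω) :=
        (hY_mart j (j + 1) (by omega) hj1n).symm.trans hcond.symm
      filter_upwards [hYj, h_nonneg j (by omega)] with ω e1 e2
      have hW0 : 0 ≤ X' j ω := e2.2.2
      rw [e1, hFj _ hW0, hfinv_left j _ (mem_Ici.mpr hW0)]
  intro i hi hin
  exact key (n - i) i hi (by omega)
end

section
/- In the discrete-time EbDO model, if (X_i, Y_i, X'_i) is any solution, then Y_0 = f_0(X_0). In particular, the net equity at time 0 is uniquely determined by the gross equity X_0 and the functions f_i. -/
open Set MeasureTheory ProbabilityTheory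

/-- Freezing lemma: if `Z` is independent of the σ-algebra `m` and `W` is `m`-measurable,
then `E[φ(W,Z)|m] = ψ(W)` where `ψ(w) = E[φ(w,Z)]`. -/
lemma ebdo_freezing {Ω : Type*} {m : MeasurableSpace Ω} [mΩ : MeasurableSpace Ω] {P : Measure Ω}
    [IsProbabilityMeasure P] (hm : m ≤ mΩ)
    {W Z : Ω → ℝ} (hW : Measurable[m] W) (hZ : Measurable Z)
    (hindep : Indep m (MeasurableSpace.comap Z inferInstance) P)
    {φ : ℝ → ℝ → ℝ} (hφ : Measurable fun p : ℝ × ℝ => φ p.1 p.2)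
    (hint : Integrable (fun ω => φ (W ω) (Z ω)) P) :
    (fun ω => ∫ ω', φ (W ω) (Z ω') ∂P) =ᵐ[P] P[fun ω => φ (W ω) (Z ω)|m] := by
  haveI : IsFiniteMeasure (P.trim hm) := by
    constructor
    rw [trim_measurableSet_eq hm MeasurableSet.univ]
    exact measure_lt_top P _
  haveI : IsProbabilityMeasure (P.map Z) := Measure.isProbabilityMeasure_map hZ.aemeasurable
  set ν : Measure ℝ := P.map Z with hν
  set ψ : ℝ → ℝ := fun w => ∫ z, φ w z ∂ν with hψ
  have hψm : StronglyMeasurable ψ := by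
    exact MeasureTheory.StronglyMeasurable.integral_prod_right (f := φ) hφ.stronglyMeasurable
  have hψW : (fun ω => ∫ ω', φ (W ω) (Z ω') ∂P) = fun ω => ψ (W ω) := by
    funext ω
    rw [hψ]
    exact (integral_map hZ.aemeasurable
      (hφ.comp (measurable_const.prodMk measurable_id)).aestronglyMeasurable).symm
  rw [hψW]
  have hWmeas : Measurable W := hW.mono hm le_rfl
  have hintW : Integrable (fun ω => ψ (W ω)) P := by
    have hIF : IndepFun W Z P :=
      indep_of_indep_of_le_left hindep hW.comap_le
    have hmapW : P.map (fun ω => (W ω, Z ω)) = (P.map W).prod ν :=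
      (indepFun_iff_map_prod_eq_prod_map_map hWmeas.aemeasurable hZ.aemeasurable).mp hIF
    have hFint : Integrable (fun p : ℝ × ℝ => φ p.1 p.2) ((P.map W).prod ν) := by
      rw [← hmapW]
      exact (integrable_map_measure hφ.aestronglyMeasurable
        (hWmeas.prodMk hZ).aemeasurable).mpr hint
    have hB : Integrable (fun w => ∫ z, ‖φ w z‖ ∂ν) (P.map W) :=
      hFint.integral_norm_prod_left
    have hBW : Integrable (fun ω => ∫ z, ‖φ (W ω) z‖ ∂ν) P := by
      have := (integrable_map_measure hB.aestronglyMeasurable hWmeas.aemeasurable).mp ?_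
      · exact this
      · exact hB
    refine Integrable.mono' hBW ((hψm.measurable.comp hWmeas).aestronglyMeasurable) ?_
    refine Filter.Eventually.of_forall fun ω => ?_
    exact norm_integral_le_integral_norm _
  refine ae_eq_condExp_of_forall_setIntegral_eq hm hint
    (fun s _ _ => hintW.integrableOn) (fun s hs _ => ?_)
    ((hψm.measurable.comp hW).stronglyMeasurable.aestronglyMeasurable)
  set ξ : Ω → ℝ × ℝ := fun ω => (s.indicator (fun _ => (1:ℝ)) ω, W ω) with hξdef
  have hξm : Measurable[m] ξ := Measurable.prodMk
    ((measurable_const : Measurable[m] fun _ : Ω => (1:ℝ)).indicator hs) hW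
  have hξ : Measurable ξ := hξm.mono hm le_rfl
  have hIF : IndepFun ξ Z P := indep_of_indep_of_le_left hindep hξm.comap_le
  have hmap : P.map (fun ω => (ξ ω, Z ω)) = (P.map ξ).prod ν :=
    (indepFun_iff_map_prod_eq_prod_map_map hξ.aemeasurable hZ.aemeasurable).mp hIF
  set F : (ℝ × ℝ) × ℝ → ℝ := fun p => p.1.1 * φ p.1.2 p.2 with hFdef
  have hF : Measurable F :=
    (measurable_fst.comp measurable_fst).mul
      (hφ.comp ((measurable_snd.comp measurable_fst).prodMk measurable_snd))
  have hcompeq : (fun ω => F (ξ ω, Z ω)) = fun ω => s.indicator (fun _ => (1:ℝ)) ω * φ (W ω) (Z ω) := rfl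
  have hind_eq : ∀ ω, s.indicator (fun _ => (1:ℝ)) ω * φ (W ω) (Z ω)
      = s.indicator (fun ω' => φ (W ω') (Z ω')) ω := by
    intro ω
    by_cases hωs : ω ∈ s
    · simp [Set.indicator_of_mem hωs]
    · simp [Set.indicator_of_notMem hωs]
  have hint' : Integrable (fun ω => F (ξ ω, Z ω)) P := by
    rw [hcompeq]
    refine (hint.indicator (hm s hs)).congr ?_
    exact Filter.Eventually.of_forall fun ω => (hind_eq ω).symm
  have hFprod : Integrable F ((P.map ξ).prod ν) := by
    rw [← hmap]
    exact (integrable_map_measure hF.aestronglyMeasurable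
      ((hξ.prodMk hZ)).aemeasurable).mpr hint'
  have h1 : ∫ x in s, φ (W x) (Z x) ∂P = ∫ ω, F (ξ ω, Z ω) ∂P := by
    rw [hcompeq, ← integral_indicator (hm s hs)]
    exact integral_congr_ae (Filter.Eventually.of_forall fun ω => (hind_eq ω).symm)
  have h2 : ∫ ω, F (ξ ω, Z ω) ∂P = ∫ p, F p ∂((P.map ξ).prod ν) := by
    rw [← hmap]
    exact (integral_map (hξ.prodMk hZ).aemeasurable hF.aestronglyMeasurable).symm
  have h3 : ∫ p, F p ∂((P.map ξ).prod ν) = ∫ p, p.1 * ψ p.2 ∂(P.map ξ) := by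
    rw [integral_prod F hFprod]
    refine integral_congr_ae (Filter.Eventually.of_forall fun p => ?_)
    simp only [hFdef, hψ]
    rw [integral_const_mul]
  have h4 : ∫ p, p.1 * ψ p.2 ∂(P.map ξ) = ∫ x in s, ψ (W x) ∂P := by
    rw [integral_map (f := fun p : ℝ × ℝ => p.1 * ψ p.2) hξ.aemeasurable
      ((measurable_fst.mul (hψm.measurable.comp measurable_snd) :
        Measurable fun p : ℝ × ℝ => p.1 * ψ p.2).aestronglyMeasurable)]
    rw [← integral_indicator (hm s hs)]
    refine integral_congr_ae (Filter.Eventually.of_forall fun ω => ?_)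
    by_cases hωs : ω ∈ s
    · simp [hξdef, Set.indicator_of_mem hωs]
    · simp [hξdef, Set.indicator_of_notMem hωs]
  rw [h1, h2, h3, h4]

/-- In the discrete-time EbDO model, any solution (X, Y, X') satisfies
Y_0 = f_0(X_0): the net equity at time 0 is uniquely determined by the gross
equity X_0 and the functions f_i. -/
theorem ebdo_stmt7
    {Ω : Type*} [mΩ : MeasurableSpace Ω] (P : Measure Ω) [IsProbabilityMeasure P]
    (n : ℕ) (hn : 0 < n)
    (Z : ℕ → Ω → ℝ) (h f finv g : ℕ → ℝ → ℝ)
    (ℱ : Filtration ℕ mΩ)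
    -- the Z_i are independent, positive, integrable, mean 1 (e.g. lognormal):
    (hZ_meas : ∀ i, Measurable (Z i))
    (hZ_pos : ∀ i, ∀ᵐ ω ∂P, 0 < Z i ω)
    (hZ_int : ∀ i, Integrable (Z i) P)
    (hZ_mean : ∀ i, ∫ ω, Z i ω ∂P = 1)
    (hZ_indep : iIndepFun Z P)
    -- the filtration is generated by the Z_j, j ≤ i:
    (hℱ : ∀ i, (ℱ i : MeasurableSpace Ω)
      = ⨆ j ∈ Finset.Icc 1 i, MeasurableSpace.comap (Z j) inferInstance)
    -- the payoff functions h_i: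
    (hh_mono : ∀ i, MonotoneOn (h i) (Ici 0))
    (hh_map : ∀ i, ∀ y ∈ Ici (0:ℝ), h i y ∈ Ici (0:ℝ))
    (hh0 : ∀ i, h i 0 = 0)
    -- the functions f_i are strictly increasing bijections of [0,∞), f_n = Id:
    (hfn : ∀ y : ℝ, f n y = y)
    (hf_mono : ∀ i, StrictMonoOn (f i) (Ici 0))
    (hf_map : ∀ i, ∀ y ∈ Ici (0:ℝ), f i y ∈ Ici (0:ℝ))
    (hf0 : ∀ i, f i 0 = 0)
    (hfinv_map : ∀ i, ∀ x ∈ Ici (0:ℝ), finv i x ∈ Ici (0:ℝ))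
    (hfinv_left : ∀ i, ∀ y ∈ Ici (0:ℝ), finv i (f i y) = y)
    (hfinv_right : ∀ i, ∀ x ∈ Ici (0:ℝ), f i (finv i x) = x)
    -- g_i is the inverse of finv_i + h_i on [0,∞):
    (hg_map : ∀ i, ∀ x ∈ Ici (0:ℝ), g i x ∈ Ici (0:ℝ))
    (hg_left : ∀ i, ∀ y ∈ Ici (0:ℝ), g i (finv i y + h i y) = y)
    (hg_right : ∀ i, ∀ x ∈ Ici (0:ℝ), finv i (g i x) + h i (g i x) = x)
    -- the backward recursion f_{i-1}(x) = E[(f_i⁻¹ + h_i)⁻¹(x·Z_i)]: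
    (hrec : ∀ i, 1 ≤ i → i ≤ n → ∀ x ∈ Ici (0:ℝ),
      f (i - 1) x = ∫ ω, g i (x * Z i ω) ∂P)
    -- the solution processes:
    (X Y X' : ℕ → Ω → ℝ) (x₀ : ℝ) (hx₀ : 0 ≤ x₀)
    (h_nonneg : ∀ i ≤ n, ∀ᵐ ω ∂P, 0 ≤ X i ω ∧ 0 ≤ Y i ω ∧ 0 ≤ X' i ω)
    (h_adapted : ∀ i ≤ n, StronglyMeasurable[ℱ i] (X i) ∧
      StronglyMeasurable[ℱ i] (Y i) ∧ StronglyMeasurable[ℱ i] (X' i))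
    (hXrec : ∀ i, 1 ≤ i → i ≤ n → ∀ᵐ ω ∂P, X i ω = X' (i - 1) ω * Z i ω)
    (hX'rec : ∀ i, 1 ≤ i → i ≤ n → ∀ᵐ ω ∂P, X' i ω = X i ω - h i (Y i ω))
    (hY_int : ∀ i ≤ n, Integrable (Y i) P)
    (hY_mart : ∀ i j, i ≤ j → j ≤ n → P[Y j|ℱ i] =ᵐ[P] Y i)
    (h_term : ∀ᵐ ω ∂P, Y n ω = X' n ω)
    (h_init : ∀ ω, X 0 ω = x₀ ∧ X' 0 ω = x₀)  :
    ∀ᵐ ω ∂P, Y 0 ω = f 0 x₀ := by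
  classical
  -- finv i is strictly monotone on [0,∞)
  have hfinv_mono : ∀ i, StrictMonoOn (finv i) (Ici 0) := by
    intro i a ha b hb hab
    by_contra hle
    push_neg at hle
    have hfa : f i (finv i b) ≤ f i (finv i a) :=
      (hf_mono i).monotoneOn (hfinv_map i b hb) (hfinv_map i a ha) hle
    rw [hfinv_right i a ha, hfinv_right i b hb] at hfa
    exact absurd hab (not_lt.mpr hfa)
  -- g i is monotone on [0,∞)
  have hg_mono : ∀ i, MonotoneOn (g i) (Ici 0) := by
    intro i a ha b hb hab
    by_contra hle
    push_neg at hle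
    have h1 : finv i (g i b) + h i (g i b) < finv i (g i a) + h i (g i a) :=
      add_lt_add_of_lt_of_le (hfinv_mono i (hg_map i b hb) (hg_map i a ha) hle)
        ((hh_mono i) (hg_map i b hb) (hg_map i a ha) hle.le)
    rw [hg_right i a ha, hg_right i b hb] at h1
    exact absurd hab (not_le.mpr h1)
  -- the truncated version G of g is globally monotone, hence measurable
  set G : ℕ → ℝ → ℝ := fun i x => g i (max x 0) with hG
  have hGmono : ∀ i, Monotone (G i) := by
    intro i x y hxy
    exact hg_mono i (mem_Ici.mpr (le_max_right x 0)) (mem_Ici.mpr (le_max_right y 0))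
      (max_le_max hxy le_rfl)
  have hGmeas : ∀ i, Measurable (G i) := fun i => (hGmono i).measurable
  -- independence of Z i from ℱ (i-1)
  have hindep : ∀ i, 1 ≤ i →
      Indep (ℱ (i-1) : MeasurableSpace Ω) (MeasurableSpace.comap (Z i) inferInstance) P := by
    intro i hi
    rw [hℱ (i-1)]
    have hdisj : Disjoint {j : ℕ | j ∈ Finset.Icc 1 (i-1)} ({i} : Set ℕ) := by
      simp only [Set.disjoint_singleton_right, Set.mem_setOf_eq, Finset.mem_Icc]
      omega
    have hI := indep_iSup_of_disjoint
      (m := fun j => MeasurableSpace.comap (Z j) inferInstance)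
      (fun k => (hZ_meas k).comap_le) hZ_indep hdisj
    rw [iSup_singleton] at hI
    exact hI
  -- inductive step: if Y i = f i (X' i) a.e., then Y (i-1) = f (i-1) (X' (i-1)) a.e.
  have step : ∀ i, 1 ≤ i → i ≤ n →
      (Y i =ᵐ[P] fun ω => f i (X' i ω)) →
      Y (i-1) =ᵐ[P] fun ω => f (i-1) (X' (i-1) ω) := by
    intro i h1 hin IH
    have hi1n : i - 1 ≤ n := le_trans (Nat.sub_le i 1) hin
    have hYG : Y i =ᵐ[P] fun ω => G i (X' (i-1) ω * Z i ω) := by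
      filter_upwards [IH, h_nonneg i hin, hX'rec i h1 hin, hXrec i h1 hin] with ω hIH hpos hX' hX
      obtain ⟨hXp, hYp, hX'p⟩ := hpos
      have hfinvY : finv i (Y i ω) = X' i ω := by
        rw [hIH]; exact hfinv_left i _ (mem_Ici.mpr hX'p)
      have hXi : finv i (Y i ω) + h i (Y i ω) = X i ω := by
        rw [hfinvY, hX']; ring
      have hgX : g i (X i ω) = Y i ω := by
        rw [← hXi]; exact hg_left i _ (mem_Ici.mpr hYp)
      rw [← hX]
      show Y i ω = g i (max (X i ω) 0)
      rw [max_eq_left hXp, hgX]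
    have hW : Measurable[ℱ (i-1)] (X' (i-1)) := ((h_adapted (i-1) hi1n).2.2).measurable
    have hfr := ebdo_freezing (ℱ.le (i-1)) hW (hZ_meas i) (hindep i h1)
      (φ := fun w z => G i (w * z))
      ((hGmeas i).comp (measurable_fst.mul measurable_snd))
      ((hY_int i hin).congr hYG)
    have hc1 : P[fun ω => G i (X' (i-1) ω * Z i ω)|ℱ (i-1)] =ᵐ[P] P[Y i|ℱ (i-1)] :=
      condExp_congr_ae hYG.symm
    have hc2 : P[Y i|ℱ (i-1)] =ᵐ[P] Y (i-1) := hY_mart (i-1) i (Nat.sub_le i 1) hin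
    have hRHS : (fun ω => ∫ ω', G i (X' (i-1) ω * Z i ω') ∂P)
        =ᵐ[P] fun ω => f (i-1) (X' (i-1) ω) := by
      filter_upwards [h_nonneg (i-1) hi1n] with ω hpos
      obtain ⟨_, _, hX'p⟩ := hpos
      have hae : ∀ᵐ ω' ∂P, G i (X' (i-1) ω * Z i ω') = g i (X' (i-1) ω * Z i ω') := by
        filter_upwards [hZ_pos i] with ω' hz
        have hnn : 0 ≤ X' (i-1) ω * Z i ω' := mul_nonneg hX'p hz.le
        show g i (max (X' (i-1) ω * Z i ω') 0) = g i (X' (i-1) ω * Z i ω')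
        rw [max_eq_left hnn]
      rw [integral_congr_ae hae]
      exact (hrec i h1 hin (X' (i-1) ω) (mem_Ici.mpr hX'p)).symm
    exact ((hc2.symm.trans hc1.symm).trans hfr.symm).trans hRHS
  -- downward induction
  have key : ∀ k, k ≤ n → Y (n - k) =ᵐ[P] fun ω => f (n - k) (X' (n - k) ω) := by
    intro k
    induction k with
    | zero =>
      intro _
      simp only [Nat.sub_zero]
      filter_upwards [h_term] with ω hω
      rw [hω, hfn]
    | succ k ih =>
      intro hk
      have hkn : k ≤ n := Nat.le_of_succ_le hk
      have h1 : 1 ≤ n - k := by omega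
      have heq : n - (k+1) = (n - k) - 1 := by omega
      rw [heq]
      exact step (n-k) h1 (Nat.sub_le n k) (ih hkn)
  have h0 := key n le_rfl
  rw [Nat.sub_self] at h0
  filter_upwards [h0] with ω hω
  rw [hω, (h_init ω).2]
end

section
/- Let c ≥ 0, T > 0, and let V : [0,T] → ℝ be differentiable with V(T) = 1 and V'(t) = g(t)·V(t)² for a measurable function g with 0 ≤ g(t) ≤ c. Then exp(−cT) ≤ V(t) ≤ 1 for all t ∈ [0,T]. -/
open Set

/-- If V : [0,T] → ℝ is differentiable with V(T) = 1 and
V'(t) = g(t)·V(t)² for measurable g with 0 ≤ g ≤ c, then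
exp(−cT) ≤ V(t) ≤ 1 on [0,T]. -/
theorem riccati_bounds (c T : ℝ) (hc : 0 ≤ c) (hT : 0 < T)
    (V g : ℝ → ℝ) (hg_meas : Measurable g)
    (hg_bd : ∀ t ∈ Icc 0 T, 0 ≤ g t ∧ g t ≤ c)
    (hV : ∀ t ∈ Icc 0 T, HasDerivAt V (g t * V t ^ 2) t)
    (hVT : V T = 1) :
    ∀ t ∈ Icc 0 T, Real.exp (-c * T) ≤ V t ∧ V t ≤ 1 := by
  have hVcont : ContinuousOn V (Icc 0 T) := fun t ht =>
    (hV t ht).continuousAt.continuousWithinAt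
  -- V is monotone on [0,T]
  have hmono : MonotoneOn V (Icc 0 T) := by
    apply monotoneOn_of_deriv_nonneg (convex_Icc 0 T) hVcont
    · intro t ht
      rw [interior_Icc] at ht
      exact (hV t (Ioo_subset_Icc_self ht)).differentiableAt.differentiableWithinAt
    · intro t ht
      rw [interior_Icc] at ht
      rw [(hV t (Ioo_subset_Icc_self ht)).deriv]
      exact mul_nonneg (hg_bd t (Ioo_subset_Icc_self ht)).1 (sq_nonneg _)
  have hle1 : ∀ t ∈ Icc 0 T, V t ≤ 1 := by
    intro t ht
    have := hmono ht (right_mem_Icc.mpr hT.le) ht.2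
    rwa [hVT] at this
  -- Gronwall-type helper
  have key : ∀ a ∈ Icc 0 T, (∀ t ∈ Ioo a T, 0 ≤ V t) →
      Real.exp (-c * T) * V T ≤ Real.exp (-c * a) * V a := by
    intro a ha hpos
    set G : ℝ → ℝ := fun t => Real.exp (-c * t) * V t with hGdef
    have hGd : ∀ t ∈ Ioo a T, HasDerivAt G
        (Real.exp (-c * t) * (-c * 1) * V t + Real.exp (-c * t) * (g t * V t ^ 2)) t := by
      intro t ht
      have h1 : HasDerivAt (fun x => Real.exp (-c * x)) (Real.exp (-c * t) * (-c * 1)) t :=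
        ((hasDerivAt_id t).const_mul (-c)).exp
      have ht' : t ∈ Icc 0 T := ⟨ha.1.trans ht.1.le, ht.2.le⟩
      exact h1.mul (hV t ht')
    have hanti : AntitoneOn G (Icc a T) := by
      apply antitoneOn_of_deriv_nonpos (convex_Icc a T)
      · exact ((Real.continuous_exp.comp (continuous_const.mul continuous_id)).continuousOn).mul
          (hVcont.mono (Icc_subset_Icc ha.1 le_rfl))
      · intro t ht
        rw [interior_Icc] at ht
        exact (hGd t ht).differentiableAt.differentiableWithinAt
      · intro t ht
        rw [interior_Icc] at ht
        rw [(hGd t ht).deriv]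
        have ht' : t ∈ Icc 0 T := ⟨ha.1.trans ht.1.le, ht.2.le⟩
        have hV0 : 0 ≤ V t := hpos t ht
        have hV1 : V t ≤ 1 := hle1 t ht'
        have hg0 := (hg_bd t ht').1
        have hg1 := (hg_bd t ht').2
        have he : 0 < Real.exp (-c * t) := Real.exp_pos _
        have h1 : g t * V t ^ 2 ≤ c * V t := by
          nlinarith [mul_nonneg (sub_nonneg.mpr hg1) (sq_nonneg (V t)),
            mul_nonneg (mul_nonneg hc hV0) (sub_nonneg.mpr hV1)]
        nlinarith [mul_le_mul_of_nonneg_left h1 he.le]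
    exact hanti (left_mem_Icc.mpr ha.2) (right_mem_Icc.mpr ha.2) ha.2
  -- positivity of V
  have hVpos : ∀ t ∈ Icc 0 T, 0 < V t := by
    by_contra h
    push_neg at h
    obtain ⟨t₀, ht₀, hVt₀⟩ := h
    set S : Set ℝ := Icc 0 T ∩ V ⁻¹' Iic 0 with hS
    have hScl : IsClosed S := hVcont.preimage_isClosed_of_isClosed isClosed_Icc isClosed_Iic
    have hSne : S.Nonempty := ⟨t₀, ht₀, hVt₀⟩
    have hSbdd : BddAbove S := BddAbove.mono inter_subset_left bddAbove_Icc
    have hs := hScl.csSup_mem hSne hSbdd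
    set s := sSup S
    obtain ⟨hsIcc, hsV⟩ := hs
    have hsV : V s ≤ 0 := hsV
    have hsT : s < T := by
      rcases lt_or_eq_of_le hsIcc.2 with h | h
      · exact h
      · exfalso; rw [h, hVT] at hsV; linarith
    have hkey := key s hsIcc (fun t ht => by
      by_contra hneg
      push_neg at hneg
      have : t ∈ S := ⟨⟨hsIcc.1.trans ht.1.le, ht.2.le⟩, hneg.le⟩
      exact absurd (le_csSup hSbdd this) (not_le.mpr ht.1))
    rw [hVT] at hkey
    have he1 : 0 < Real.exp (-c * T) := Real.exp_pos _
    have he2 : 0 < Real.exp (-c * s) := Real.exp_pos _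
    nlinarith
  -- conclusion
  intro t ht
  refine ⟨?_, hle1 t ht⟩
  have hkey := key t ht (fun u hu => (hVpos u ⟨ht.1.trans hu.1.le, hu.2.le⟩).le)
  rw [hVT] at hkey
  have he : Real.exp (-c * t) ≤ 1 := by
    apply Real.exp_le_one_iff.mpr
    nlinarith [ht.1]
  have hV0 : 0 ≤ V t := (hVpos t ht).le
  nlinarith
end
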